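/- Let q be an odd prime power with q > 16 and k = q − 2. Then u ∈ 𝔽_q^q is a deep hole of TRS_{q-2}(𝔽_q, θ) if and only if u = u_f for some f(x) = w_0 x^{q-1} + w_1 x^{q-2} + g(x) with g ∈ S_{q-2,θ} and w_0, w_1 ∈ 𝔽_q satisfying: either w_0 = 0 and w_1 ≠ 0, or w_0 ≠ 0 and w_0^2 − 4 w_0 w_1 θ is a nonzero non-square in 𝔽_q (i.e., η(w_0^2 − 4 w_0 w_1 θ) = −1 for the quadratic character η of 𝔽_q). -/

import Mathlib

open Polynomial Finset

/-- The set `S_{k,θ}` of twisted polynomials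
`Σ_{i=0}^{k-2} f_i x^i + f_{k-1}(x^{k-1} + θ x^k)`. -/
def Sset (F : Type*) [Field F] (k : ℕ) (θ : F) : Set (Polynomial F) :=
  {p | ∃ f : ℕ → F, p = (∑ i ∈ Finset.range (k - 1), Polynomial.C (f i) * Polynomial.X ^ i)
        + Polynomial.C (f (k - 1)) * (Polynomial.X ^ (k - 1) + Polynomial.C θ * Polynomial.X ^ k)}

/-- The twisted Reed–Solomon code `TRS_k(A, θ)` for the evaluation sequence `α`. -/
def TRS {F : Type*} [Field F] {n : ℕ} (α : Fin n → F) (k : ℕ) (θ : F) : Set (Fin n → F) :=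
  {v | ∃ p ∈ Sset F k θ, v = fun j => p.eval (α j)}

/-- The (Hamming) error distance `d(u, C)` from a word `u` to a code `C`. -/
noncomputable def distTo {F : Type*} [DecidableEq F] {n : ℕ} (u : Fin n → F)
    (C : Set (Fin n → F)) : ℕ :=
  sInf {d | ∃ c ∈ C, hammingDist u c = d}

/-- The covering radius `ρ(C) = max_u d(u, C)` of a code `C`. -/
noncomputable def covRad {F : Type*} [DecidableEq F] {n : ℕ} (C : Set (Fin n → F)) : ℕ :=
  sSup {d | ∃ u, distTo u C = d}

/-- `u` is a deep hole of `C` if `d(u, C) = ρ(C)`. -/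
def IsDeepHole {F : Type*} [DecidableEq F] {n : ℕ} (C : Set (Fin n → F)) (u : Fin n → F) :
    Prop :=
  distTo u C = covRad C

/-- The column vector `c_{r,θ}(a) = (1, a, …, a^{r-2}, a^{r-1} - θ a^r)ᵀ ∈ 𝔽_q^r`. -/
def crv (F : Type*) [Field F] (r : ℕ) (θ a : F) : Fin r → F :=
  fun i => if (i : ℕ) = r - 1 then a ^ (r - 1) - θ * a ^ r else a ^ (i : ℕ)

/-- The parity-check matrix `H` whose `j`-th column is `c_{r,θ}(α_j)`. -/
def Hmat {F : Type*} [Field F] {n : ℕ} (r : ℕ) (θ : F) (α : Fin n → F) :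
    Matrix (Fin r) (Fin n) F :=
  Matrix.of fun i j => crv F r θ (α j) i

set_option linter.unusedSectionVars false
set_option linter.unusedVariables false


section DHaux
variable {F : Type*} [Field F] [Fintype F] [DecidableEq F]

lemma dh_psum_zero {n m : ℕ} (hc : Fintype.card F = n + 3) (hm : m < n + 2) :
    ∑ a : F, a ^ m = 0 :=
  FiniteField.sum_pow_lt_card_sub_one (K := F) m (by rw [hc]; omega)

lemma dh_psum_top {n : ℕ} (hc : Fintype.card F = n + 3) :
    ∑ a : F, a ^ (n + 2) = -1 := by
  have h0 : (0 : F) ^ (n + 2) = 0 := zero_pow (by omega)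
  have hcast : ((n : F) + 3) = 0 := by
    have := FiniteField.cast_card_eq_zero F
    rw [hc] at this
    push_cast at this
    exact this
  rw [← Finset.add_sum_erase Finset.univ (fun a : F => a ^ (n + 2)) (Finset.mem_univ 0), h0,
    zero_add]
  have hone : ∀ a ∈ Finset.univ.erase (0 : F), a ^ (n + 2) = 1 := by
    intro a ha
    have ha0 : a ≠ 0 := (Finset.mem_erase.mp ha).1
    have := FiniteField.pow_card_sub_one_eq_one a ha0
    rwa [hc] at this
  rw [Finset.sum_congr rfl hone, Finset.sum_const, Finset.card_erase_of_mem (Finset.mem_univ 0),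
    Finset.card_univ, hc]
  simp only [nsmul_eq_mul, mul_one]
  push_cast [Nat.cast_sub (by omega : 1 ≤ n + 3)]
  linear_combination hcast

lemma dh_psum_card {n : ℕ} (hc : Fintype.card F = n + 3) :
    ∑ a : F, a ^ (n + 3) = 0 := by
  have : ∀ a : F, a ^ (n + 3) = a ^ 1 := by
    intro a
    rw [pow_one, ← hc, FiniteField.pow_card]
  rw [Finset.sum_congr rfl fun a _ => this a]
  exact dh_psum_zero hc (by omega)

lemma dh_psum_card1 {n : ℕ} (hc : Fintype.card F = n + 3) (hn : 0 < n) :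
    ∑ a : F, a ^ (n + 4) = 0 := by
  have : ∀ a : F, a ^ (n + 4) = a ^ 2 := by
    intro a
    have h1 : a ^ (n + 4) = a ^ (n + 3) * a := by ring
    have h2 : a ^ (n + 3) = a := by rw [← hc, FiniteField.pow_card]
    rw [h1, h2, sq]
  rw [Finset.sum_congr rfl fun a _ => this a]
  exact dh_psum_zero hc (by omega)

lemma dh_sum_eval {n : ℕ} (hc : Fintype.card F = n + 3) {p : F[X]} (hp : p.natDegree < n + 3) :
    ∑ a : F, p.eval a = -p.coeff (n + 2) := by
  calc ∑ a : F, p.eval a = ∑ a : F, ∑ i ∈ Finset.range (n + 3), p.coeff i * a ^ i :=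
        Finset.sum_congr rfl fun a _ => Polynomial.eval_eq_sum_range' hp a
    _ = ∑ i ∈ Finset.range (n + 3), p.coeff i * ∑ a : F, a ^ i := by
        rw [Finset.sum_comm]
        exact Finset.sum_congr rfl fun i _ => (Finset.mul_sum _ _ _).symm
    _ = -p.coeff (n + 2) := by
        rw [Finset.sum_eq_single (n + 2)]
        · rw [dh_psum_top hc]; ring
        · intro i hi hne
          rw [Finset.mem_range] at hi
          rw [dh_psum_zero hc (by omega), mul_zero]
        · intro h
          exact absurd (Finset.mem_range.mpr (by omega)) h

lemma dh_sum_eval_mul {n : ℕ} (hc : Fintype.card F = n + 3) (hn : 0 < n) (θ : F) {p : F[X]}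
    (hp : p.natDegree < n + 3) :
    ∑ a : F, p.eval a * (a - θ * a ^ 2) = θ * p.coeff n - p.coeff (n + 1) := by
  have key : ∀ a : F, p.eval a * (a - θ * a ^ 2)
      = (∑ i ∈ Finset.range (n + 3), p.coeff i * a ^ (i + 1))
        - θ * ∑ i ∈ Finset.range (n + 3), p.coeff i * a ^ (i + 2) := by
    intro a
    rw [Polynomial.eval_eq_sum_range' hp a, Finset.sum_mul, Finset.mul_sum,
      ← Finset.sum_sub_distrib]
    exact Finset.sum_congr rfl fun i _ => by ring
  have hA : ∑ a : F, ∑ i ∈ Finset.range (n + 3), p.coeff i * a ^ (i + 1)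
      = -p.coeff (n + 1) := by
    rw [Finset.sum_comm]
    have : ∀ i ∈ Finset.range (n + 3), ∑ a : F, p.coeff i * a ^ (i + 1)
        = p.coeff i * ∑ a : F, a ^ (i + 1) :=
      fun i _ => (Finset.mul_sum _ _ _).symm
    rw [Finset.sum_congr rfl this, Finset.sum_eq_single (n + 1)]
    · rw [dh_psum_top hc]; ring
    · intro i hi hne
      rw [Finset.mem_range] at hi
      rcases eq_or_ne i (n + 2) with h | h
      · rw [h, show n + 2 + 1 = n + 3 from rfl, dh_psum_card hc, mul_zero]
      · rw [dh_psum_zero hc (by omega), mul_zero]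
    · intro h
      exact absurd (Finset.mem_range.mpr (by omega)) h
  have hB : ∑ a : F, ∑ i ∈ Finset.range (n + 3), p.coeff i * a ^ (i + 2)
      = -p.coeff n := by
    rw [Finset.sum_comm]
    have : ∀ i ∈ Finset.range (n + 3), ∑ a : F, p.coeff i * a ^ (i + 2)
        = p.coeff i * ∑ a : F, a ^ (i + 2) :=
      fun i _ => (Finset.mul_sum _ _ _).symm
    rw [Finset.sum_congr rfl this, Finset.sum_eq_single n]
    · rw [dh_psum_top hc]; ring
    · intro i hi hne
      rw [Finset.mem_range] at hi
      rcases eq_or_ne i (n + 1) with h | h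
      · rw [h, show n + 1 + 2 = n + 3 from rfl, dh_psum_card hc, mul_zero]
      · rcases eq_or_ne i (n + 2) with h' | h'
        · rw [h', show n + 2 + 2 = n + 4 from rfl, dh_psum_card1 hc hn, mul_zero]
        · rw [dh_psum_zero hc (by omega), mul_zero]
    · intro h
      exact absurd (Finset.mem_range.mpr (by omega)) h
  calc ∑ a : F, p.eval a * (a - θ * a ^ 2)
      = (∑ a : F, ∑ i ∈ Finset.range (n + 3), p.coeff i * a ^ (i + 1))
        - θ * ∑ a : F, ∑ i ∈ Finset.range (n + 3), p.coeff i * a ^ (i + 2) := by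
        rw [Finset.sum_congr rfl fun a _ => key a, Finset.sum_sub_distrib, ← Finset.mul_sum]
    _ = θ * p.coeff n - p.coeff (n + 1) := by rw [hA, hB]; ring

end DHaux



section DHaux
variable {F : Type*} [Field F] [Fintype F] [DecidableEq F]

lemma dh_Sset_spec {n : ℕ} {θ : F} {g : F[X]} (hg : g ∈ Sset F (n + 1) θ) :
    g.natDegree ≤ n + 1 ∧ g.coeff (n + 1) = θ * g.coeff n := by
  obtain ⟨f, hf⟩ := hg
  have hf' : g = (∑ i ∈ Finset.range n, C (f i) * X ^ i)
      + C (f n) * (X ^ n + C θ * X ^ (n + 1)) := by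
    simpa using hf
  have hd : g.natDegree ≤ n + 1 := by
    rw [hf']
    refine le_trans (Polynomial.natDegree_add_le _ _) (max_le ?_ ?_)
    · exact Polynomial.natDegree_sum_le_of_forall_le _ _ fun i hi =>
        le_trans (Polynomial.natDegree_C_mul_X_pow_le _ _)
          (by rw [Finset.mem_range] at hi; omega)
    · refine le_trans (Polynomial.natDegree_mul_le) ?_
      rw [Polynomial.natDegree_C, zero_add]
      refine le_trans (Polynomial.natDegree_add_le _ _) (max_le ?_ ?_)
      · rw [Polynomial.natDegree_X_pow]; omega
      · exact Polynomial.natDegree_C_mul_X_pow_le _ _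
  have hcn : g.coeff n = f n := by
    rw [hf', Polynomial.coeff_add, Polynomial.finset_sum_coeff]
    have h1 : ∑ i ∈ Finset.range n, (C (f i) * X ^ i).coeff n = 0 := by
      refine Finset.sum_eq_zero fun i hi => ?_
      rw [Finset.mem_range] at hi
      rw [Polynomial.coeff_C_mul, Polynomial.coeff_X_pow, if_neg (by omega), mul_zero]
    rw [h1, zero_add, Polynomial.coeff_C_mul, Polynomial.coeff_add, Polynomial.coeff_X_pow,
      Polynomial.coeff_C_mul, Polynomial.coeff_X_pow, if_pos rfl, if_neg (by omega)]
    ring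
  have hcn1 : g.coeff (n + 1) = θ * f n := by
    rw [hf', Polynomial.coeff_add, Polynomial.finset_sum_coeff]
    have h1 : ∑ i ∈ Finset.range n, (C (f i) * X ^ i).coeff (n + 1) = 0 := by
      refine Finset.sum_eq_zero fun i hi => ?_
      rw [Finset.mem_range] at hi
      rw [Polynomial.coeff_C_mul, Polynomial.coeff_X_pow, if_neg (by omega), mul_zero]
    rw [h1, zero_add, Polynomial.coeff_C_mul, Polynomial.coeff_add, Polynomial.coeff_X_pow,
      Polynomial.coeff_C_mul, Polynomial.coeff_X_pow, if_pos rfl, if_neg (by omega)]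
    ring
  exact ⟨hd, by rw [hcn, hcn1]⟩

end DHaux


set_option linter.unusedSectionVars false

noncomputable def sy0 {F : Type*} [Field F] {m : ℕ} (v : Fin m → F) : F := ∑ j, v j

noncomputable def sy1 {F : Type*} [Field F] {m : ℕ} (θ : F) (α : Fin m → F) (v : Fin m → F) : F :=
  ∑ j, v j * (α j - θ * (α j) ^ 2)

section DHaux
variable {F : Type*} [Field F] [Fintype F] [DecidableEq F]

lemma dh_syndrome {n : ℕ} (hc : Fintype.card F = n + 3) (hn : 0 < n) {θ : F}
    {α : Fin (n + 3) → F} (hα : Function.Bijective α) (w0 w1 : F) {g : F[X]}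
    (hg : g ∈ Sset F (n + 1) θ) :
    sy0 (fun j => (C w0 * X ^ (n + 2) + C w1 * X ^ (n + 1) + g).eval (α j)) = -w0 ∧
    sy1 θ α (fun j => (C w0 * X ^ (n + 2) + C w1 * X ^ (n + 1) + g).eval (α j)) = -w1 := by
  obtain ⟨hdeg, hco⟩ := dh_Sset_spec hg
  set p : F[X] := C w0 * X ^ (n + 2) + C w1 * X ^ (n + 1) + g with hpdef
  have hpd : p.natDegree < n + 3 := by
    rw [hpdef]
    have h1 := Polynomial.natDegree_C_mul_X_pow_le w0 (n + 2)
    have h2 := Polynomial.natDegree_C_mul_X_pow_le w1 (n + 1)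
    have := Polynomial.natDegree_add_le (C w0 * X ^ (n + 2) + C w1 * X ^ (n + 1)) g
    have := Polynomial.natDegree_add_le (C w0 * X ^ (n + 2)) (C w1 * X ^ (n + 1))
    omega
  have hg2 : g.coeff (n + 2) = 0 := Polynomial.coeff_eq_zero_of_natDegree_lt (by omega)
  have hc2 : p.coeff (n + 2) = w0 := by
    rw [hpdef]
    simp [Polynomial.coeff_add, Polynomial.coeff_C_mul, Polynomial.coeff_X_pow, hg2]
  have hc1 : p.coeff (n + 1) = w1 + θ * g.coeff n := by
    rw [hpdef]
    simp [Polynomial.coeff_add, Polynomial.coeff_C_mul, Polynomial.coeff_X_pow, hco]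
  have hc0 : p.coeff n = g.coeff n := by
    rw [hpdef]
    simp [Polynomial.coeff_add, Polynomial.coeff_C_mul, Polynomial.coeff_X_pow]
  have hre : ∀ h : F → F, ∑ j, h (α j) = ∑ a : F, h a := fun h =>
    Fintype.sum_bijective α hα _ h fun _ => rfl
  constructor
  · rw [sy0, hre (fun a => p.eval a), dh_sum_eval hc hpd, hc2]
  · rw [sy1, hre (fun a => p.eval a * (a - θ * a ^ 2)), dh_sum_eval_mul hc hn θ hpd, hc1, hc0]
    ring

lemma dh_decomp {n : ℕ} (hc : Fintype.card F = n + 3) (θ : F)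
    {α : Fin (n + 3) → F} (hα : Function.Bijective α) (u : Fin (n + 3) → F) :
    ∃ w0 w1 : F, ∃ g ∈ Sset F (n + 1) θ,
      u = fun j => (C w0 * X ^ (n + 2) + C w1 * X ^ (n + 1) + g).eval (α j) := by
  set p := Lagrange.interpolate Finset.univ α u with hp
  have hinj : Set.InjOn α ↑(Finset.univ : Finset (Fin (n + 3))) := hα.1.injOn
  have hdeg : p.degree < ((n + 3 : ℕ) : WithBot ℕ) := by
    have := Lagrange.degree_interpolate_lt u hinj
    rw [Finset.card_univ, Fintype.card_fin] at this
    exact this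
  have hnd : p.natDegree < n + 3 := by
    rcases eq_or_ne p 0 with h | h
    · simp [h]
    · exact (Polynomial.natDegree_lt_iff_degree_lt h).mpr hdeg
  refine ⟨p.coeff (n + 2), p.coeff (n + 1) - θ * p.coeff n,
    (∑ i ∈ Finset.range n, C (p.coeff i) * X ^ i) + C (p.coeff n) * (X ^ n + C θ * X ^ (n + 1)),
    ⟨p.coeff, by simp⟩, ?_⟩
  have hpeq : C (p.coeff (n + 2)) * X ^ (n + 2) + C (p.coeff (n + 1) - θ * p.coeff n) * X ^ (n + 1)
      + ((∑ i ∈ Finset.range n, C (p.coeff i) * X ^ i)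
        + C (p.coeff n) * (X ^ n + C θ * X ^ (n + 1))) = p := by
    conv_rhs => rw [Polynomial.as_sum_range' p (n + 3) hnd]
    rw [Finset.sum_range_succ, Finset.sum_range_succ, Finset.sum_range_succ, map_sub, map_mul]
    simp only [← Polynomial.C_mul_X_pow_eq_monomial]
    ring
  rw [hpeq]
  funext j
  exact (Lagrange.eval_interpolate_at_node u hinj (Finset.mem_univ j)).symm

end DHaux
section DHaux2
variable {F : Type*} [Field F] [Fintype F] [DecidableEq F]

lemma dh_quad {F : Type*} [Field F] (h2 : (2 : F) ≠ 0) {θ w0 : F} (hθ : θ ≠ 0) (hw0 : w0 ≠ 0)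
    (w1 : F) :
    (∃ a : F, a - θ * a ^ 2 = w1 / w0) ↔ IsSquare (w0 ^ 2 - 4 * w0 * w1 * θ) := by
  haveI : NeZero (2 : F) := ⟨h2⟩
  constructor
  · rintro ⟨a, ha⟩
    have hq : θ * (a * a) + (-1) * a + w1 / w0 = 0 := by
      rw [← ha]; ring
    have hd := discrim_eq_sq_of_quadratic_eq_zero hq
    rw [discrim] at hd
    refine ⟨w0 * (2 * θ * a + -1), ?_⟩
    have hkey : w0 ^ 2 - 4 * w0 * w1 * θ = w0 ^ 2 * ((-1 : F) ^ 2 - 4 * θ * (w1 / w0)) := by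
      field_simp
    rw [hkey, hd]
    ring
  · rintro ⟨s, hs⟩
    have hdisc : discrim θ (-1) (w1 / w0) = (s / w0) * (s / w0) := by
      rw [discrim]
      linear_combination (w0⁻¹) ^ 2 * hs + (-(1 + w0 * w0⁻¹) + 4 * θ * w1 * w0⁻¹) * (mul_inv_cancel₀ hw0)
    obtain ⟨x, hx⟩ := exists_quadratic_eq_zero hθ ⟨s / w0, hdisc⟩
    exact ⟨x, by linear_combination -hx⟩

lemma dh_sum_single {m : ℕ} (j : Fin m) (x : F) : (∑ i, (Pi.single j x : Fin m → F) i) = x := by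
  simp [Finset.sum_pi_single']

lemma dh_sum_single_mul {m : ℕ} (j : Fin m) (x : F) (h : Fin m → F) :
    (∑ i, (Pi.single j x : Fin m → F) i * h i) = x * h j := by
  have key : ∀ i, (Pi.single j x : Fin m → F) i * h i = if i = j then x * h j else 0 := by
    intro i
    by_cases hij : i = j
    · subst hij; simp
    · simp [Pi.single_eq_of_ne hij, hij]
  simp [key]

end DHaux2
section DHaux3
variable {F : Type*} [Field F] [Fintype F] [DecidableEq F]

lemma dh_hamming_le {m : ℕ} (v e : Fin m → F) (s : Finset (Fin m))
    (h : ∀ i, i ∉ s → e i = 0) : hammingDist v (v - e) ≤ s.card := by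
  rw [hammingDist]
  refine Finset.card_le_card ?_
  intro i hi
  rw [Finset.mem_filter] at hi
  by_contra his
  exact hi.2 (by rw [Pi.sub_apply, h i his, sub_zero])

lemma dh_hamming_support {m : ℕ} {v c : Fin m → F} {d : ℕ} (h : hammingDist v c ≤ d) :
    (Finset.univ.filter fun i => v i - c i ≠ 0).card ≤ d := by
  refine le_trans (le_of_eq ?_) h
  rw [hammingDist]
  congr 1
  ext i
  simp [sub_ne_zero]

end DHaux3


set_option maxHeartbeats 1000000 in
/-- Let `q` be odd, `q > 16`, `k = q - 2`. Then `u ∈ 𝔽_q^q` is a deep hole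
of `TRS_{q-2}(𝔽_q, θ)` iff `u = u_f` for some `f(x) = w_0 x^{q-1} + w_1 x^{q-2} + g(x)` with
`g ∈ S_{q-2,θ}` and either `w_0 = 0 ∧ w_1 ≠ 0`, or `w_0 ≠ 0` and `w_0² - 4 w_0 w_1 θ` is a
nonzero non-square in `𝔽_q`. -/
theorem deep_holes_odd_k_eq_q_sub_two {F : Type*} [Field F] [Fintype F] [DecidableEq F]
    (q : ℕ) (hq : q = Fintype.card F) (hodd : Odd q) (hq16 : 16 < q)
    (θ : F) (hθ : θ ≠ 0) (α : Fin q → F) (hα : Function.Bijective α) (u : Fin q → F) :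
    IsDeepHole (TRS α (q - 2) θ) u ↔
      ∃ w₀ w₁ : F, ∃ g ∈ Sset F (q - 2) θ,
        (u = fun j => (Polynomial.C w₀ * Polynomial.X ^ (q - 1)
            + Polynomial.C w₁ * Polynomial.X ^ (q - 2) + g).eval (α j)) ∧
        ((w₀ = 0 ∧ w₁ ≠ 0) ∨
          (w₀ ≠ 0 ∧ w₀ ^ 2 - 4 * w₀ * w₁ * θ ≠ 0 ∧
            ¬ IsSquare (w₀ ^ 2 - 4 * w₀ * w₁ * θ))) := by
  obtain ⟨n, rfl⟩ : ∃ n, q = n + 3 := ⟨q - 3, by omega⟩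
  have hc : Fintype.card F = n + 3 := hq.symm
  have hn : 0 < n := by omega
  have h2 : (2 : F) ≠ 0 := by
    intro h20
    obtain ⟨m, hm⟩ := hodd
    have h0 : ((n + 3 : ℕ) : F) = 0 := by rw [← hc]; exact FiniteField.cast_card_eq_zero F
    rw [hm] at h0
    push_cast at h0
    rw [h20] at h0
    simp at h0
  simp only [show n + 3 - 1 = n + 2 from rfl, show n + 3 - 2 = n + 1 from rfl]
  -- membership characterization
  have hmem : ∀ v : Fin (n + 3) → F,
      v ∈ TRS α (n + 1) θ ↔ sy0 v = 0 ∧ sy1 θ α v = 0 := by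
    intro v
    constructor
    · rintro ⟨g, hg, rfl⟩
      have h := dh_syndrome hc hn hα 0 0 hg
      have heq : C (0 : F) * X ^ (n + 2) + C (0 : F) * X ^ (n + 1) + g = g := by simp
      rw [heq] at h
      simpa using h
    · rintro ⟨h0, h1⟩
      obtain ⟨w0, w1, g, hg, hv⟩ := dh_decomp hc θ hα v
      have h := dh_syndrome hc hn hα w0 w1 hg
      rw [← hv] at h
      have hw0 : w0 = 0 := by
        have := h.1; rw [h0] at this; exact neg_eq_zero.mp this.symm
      have hw1 : w1 = 0 := by
        have := h.2; rw [h1] at this; exact neg_eq_zero.mp this.symm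
      refine ⟨g, hg, ?_⟩
      rw [hv, hw0, hw1]
      funext j
      simp
  have hsy0sub : ∀ v e : Fin (n + 3) → F, sy0 (v - e) = sy0 v - sy0 e := by
    intro v e; simp [sy0, Finset.sum_sub_distrib]
  have hsy1sub : ∀ v e : Fin (n + 3) → F, sy1 θ α (v - e) = sy1 θ α v - sy1 θ α e := by
    intro v e; simp [sy1, sub_mul, Finset.sum_sub_distrib]
  have hsingle0 : ∀ (j : Fin (n + 3)) (x : F), sy0 (Pi.single j x : Fin (n + 3) → F) = x :=
    fun j x => dh_sum_single j x
  have hsingle1 : ∀ (j : Fin (n + 3)) (x : F),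
      sy1 θ α (Pi.single j x : Fin (n + 3) → F) = x * (α j - θ * (α j) ^ 2) :=
    fun j x => dh_sum_single_mul j x _
  have hSne : ∀ v : Fin (n + 3) → F,
      {d | ∃ c ∈ TRS α (n + 1) θ, hammingDist v c = d}.Nonempty := by
    intro v
    exact ⟨_, ⟨fun _ => 0, (hmem _).mpr ⟨by simp [sy0], by simp [sy1]⟩, rfl⟩⟩
  set eα := Equiv.ofBijective α hα with heα
  have happ : ∀ x : F, α (eα.symm x) = x := fun x => eα.apply_symm_apply x
  -- distance at most 2
  have hle2 : ∀ v, distTo v (TRS α (n + 1) θ) ≤ 2 := by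
    intro v
    have hnsub : ¬ (Finset.univ : Finset F) ⊆ {0, θ⁻¹} := by
      intro hsub
      have h1 := Finset.card_le_card hsub
      have h2' : ({0, θ⁻¹} : Finset F).card ≤ 2 :=
        le_trans (Finset.card_insert_le _ _) (by simp)
      rw [Finset.card_univ, hc] at h1
      omega
    obtain ⟨b, -, hb⟩ := Finset.not_subset.mp hnsub
    simp only [Finset.mem_insert, Finset.mem_singleton, not_or] at hb
    obtain ⟨hb0, hbinv⟩ := hb
    have htb : θ * b ≠ 1 := fun h => hbinv (inv_eq_of_mul_eq_one_right h).symm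
    set j1 := eα.symm 0 with hj1
    set j2 := eα.symm b with hj2
    have hα1 : α j1 = 0 := happ 0
    have hα2 : α j2 = b := happ b
    have hj12 : j1 ≠ j2 := fun h => hb0 (by rw [← hα2, ← h, hα1])
    set t2 : F := b - θ * b ^ 2 with ht2
    have ht2ne : t2 ≠ 0 := by
      have hfac : t2 = b * (1 - θ * b) := by rw [ht2]; ring
      rw [hfac]
      exact mul_ne_zero hb0 (sub_ne_zero.mpr (Ne.symm htb))
    set β2 := sy1 θ α v / t2 with hβ2
    set β1 := sy0 v - β2 with hβ1
    set e : Fin (n + 3) → F := Pi.single j1 β1 + Pi.single j2 β2 with he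
    have hsy0e : sy0 e = sy0 v := by
      rw [he, sy0]
      simp only [Pi.add_apply]
      rw [Finset.sum_add_distrib]
      rw [show (∑ i, (Pi.single j1 β1 : Fin (n + 3) → F) i) = β1 from dh_sum_single j1 β1,
        show (∑ i, (Pi.single j2 β2 : Fin (n + 3) → F) i) = β2 from dh_sum_single j2 β2]
      rw [hβ1]; ring
    have hsy1e : sy1 θ α e = sy1 θ α v := by
      rw [he, sy1]
      simp only [Pi.add_apply, add_mul]
      rw [Finset.sum_add_distrib]
      rw [show (∑ i, (Pi.single j1 β1 : Fin (n + 3) → F) i * (α i - θ * (α i) ^ 2))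
          = β1 * (α j1 - θ * (α j1) ^ 2) from dh_sum_single_mul j1 β1 _,
        show (∑ i, (Pi.single j2 β2 : Fin (n + 3) → F) i * (α i - θ * (α i) ^ 2))
          = β2 * (α j2 - θ * (α j2) ^ 2) from dh_sum_single_mul j2 β2 _]
      rw [hα1, hα2, ← ht2]
      have h01 : (0 : F) - θ * 0 ^ 2 = 0 := by ring
      rw [h01, mul_zero, zero_add, hβ2]
      exact div_mul_cancel₀ _ ht2ne
    have hcT : v - e ∈ TRS α (n + 1) θ :=
      (hmem _).mpr ⟨by rw [hsy0sub, hsy0e, sub_self], by rw [hsy1sub, hsy1e, sub_self]⟩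
    have hdist : hammingDist v (v - e) ≤ 2 := by
      refine le_trans (dh_hamming_le v e {j1, j2} ?_) ?_
      · intro i hi
        simp only [Finset.mem_insert, Finset.mem_singleton, not_or] at hi
        rw [he, Pi.add_apply, Pi.single_eq_of_ne hi.1, Pi.single_eq_of_ne hi.2, add_zero]
      · exact le_trans (Finset.card_insert_le _ _) (by simp)
    exact le_trans (Nat.sInf_le ⟨v - e, hcT, rfl⟩) hdist
  -- support structure of small-distance words
  have hsupp : ∀ {v c : Fin (n + 3) → F}, hammingDist v c ≤ 1 →
      v - c = 0 ∨ ∃ j, (v - c) j ≠ 0 ∧ ∀ i, i ≠ j → (v - c) i = 0 := by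
    intro v c hvc
    by_cases he : v - c = 0
    · exact Or.inl he
    · right
      obtain ⟨j, hj⟩ := Function.ne_iff.mp he
      rw [Pi.zero_apply] at hj
      refine ⟨j, hj, ?_⟩
      intro i hij
      by_contra hi
      have hsub : ({i, j} : Finset (Fin (n + 3))) ⊆
          Finset.univ.filter fun x => v x - c x ≠ 0 := by
        intro x hx
        simp only [Finset.mem_insert, Finset.mem_singleton] at hx
        rcases hx with rfl | rfl <;>
          simp only [Finset.mem_filter, Finset.mem_univ, true_and]
        · exact hi
        · exact hj
      have hcard := Finset.card_le_card hsub
      rw [Finset.card_insert_of_notMem (by simpa using hij), Finset.card_singleton] at hcard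
      have := dh_hamming_support hvc
      omega
  -- characterization of distance exactly 2
  have hdist2 : ∀ v, distTo v (TRS α (n + 1) θ) = 2 ↔
      ((sy0 v = 0 ∧ sy1 θ α v ≠ 0) ∨
       (sy0 v ≠ 0 ∧ ¬ ∃ a : F, a - θ * a ^ 2 = sy1 θ α v / sy0 v)) := by
    intro v
    constructor
    · intro hd
      by_contra hP
      push_neg at hP
      obtain ⟨hP1, hP2⟩ := hP
      by_cases h0 : sy0 v = 0
      · have h1 : sy1 θ α v = 0 := hP1 h0
        have : v ∈ TRS α (n + 1) θ := (hmem v).mpr ⟨h0, h1⟩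
        have hz : distTo v (TRS α (n + 1) θ) = 0 :=
          Nat.eq_zero_of_le_zero (Nat.sInf_le ⟨v, this, hammingDist_self v⟩)
        omega
      · obtain ⟨a, ha⟩ := hP2 h0
        set j := eα.symm a with hjdef
        have hαj : α j = a := happ a
        set e : Fin (n + 3) → F := Pi.single j (sy0 v) with he
        have hs0e : sy0 e = sy0 v := hsingle0 j _
        have hs1e : sy1 θ α e = sy1 θ α v := by
          rw [he, hsingle1 j _, hαj, ha]
          exact mul_div_cancel₀ _ h0
        have hcT : v - e ∈ TRS α (n + 1) θ :=
          (hmem _).mpr ⟨by rw [hsy0sub, hs0e, sub_self], by rw [hsy1sub, hs1e, sub_self]⟩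
        have hdd : hammingDist v (v - e) ≤ 1 := by
          refine le_trans (dh_hamming_le v e {j} ?_) (by simp)
          intro i hi
          rw [Finset.mem_singleton] at hi
          rw [he]
          exact Pi.single_eq_of_ne hi _
        have hle : distTo v (TRS α (n + 1) θ) ≤ 1 :=
          le_trans (Nat.sInf_le ⟨v - e, hcT, rfl⟩) hdd
        omega
    · intro hPv
      refine le_antisymm (hle2 v) ?_
      refine le_csInf (hSne v) ?_
      rintro d ⟨c, hcT, rfl⟩
      by_contra hlt
      push_neg at hlt
      have hvc : hammingDist v c ≤ 1 := by omega
      have hsy0c := ((hmem c).mp hcT).1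
      have hsy1c := ((hmem c).mp hcT).2
      have hs0 : sy0 (v - c) = sy0 v := by rw [hsy0sub, hsy0c, sub_zero]
      have hs1 : sy1 θ α (v - c) = sy1 θ α v := by rw [hsy1sub, hsy1c, sub_zero]
      rcases hsupp hvc with hez | ⟨j, hj, hjs⟩
      · have hvceq : v = c := sub_eq_zero.mp hez
        rw [hvceq] at hPv
        rcases hPv with ⟨h0, h1⟩ | ⟨h0, -⟩
        · exact h1 hsy1c
        · exact h0 hsy0c
      · have hs0val : sy0 (v - c) = (v - c) j := by
          rw [sy0, Finset.sum_eq_single j]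
          · intro i _ hne; exact hjs i hne
          · intro h'; exact absurd (Finset.mem_univ j) h'
        have hs1val : sy1 θ α (v - c) = (v - c) j * (α j - θ * (α j) ^ 2) := by
          rw [sy1, Finset.sum_eq_single j]
          · intro i _ hne; rw [hjs i hne, zero_mul]
          · intro h'; exact absurd (Finset.mem_univ j) h'
        rcases hPv with ⟨h0, -⟩ | ⟨h0, hroot⟩
        · exact hj (by rw [← hs0val, hs0, h0])
        · refine hroot ⟨α j, ?_⟩
          have hej : (v - c) j = sy0 v := by rw [← hs0, hs0val]
          have : sy1 θ α v = sy0 v * (α j - θ * (α j) ^ 2) := by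
            rw [← hs1, hs1val, hej]
          rw [this]
          rw [mul_div_cancel_left₀ _ h0]
  -- the covering radius is 2
  have hcov : covRad (TRS α (n + 1) θ) = 2 := by
    have hub : ∀ d ∈ {d | ∃ v, distTo v (TRS α (n + 1) θ) = d}, d ≤ 2 := by
      rintro d ⟨v, rfl⟩; exact hle2 v
    have hg0 : (0 : Polynomial F) ∈ Sset F (n + 1) θ := by
      refine ⟨fun _ => 0, ?_⟩
      simp
    have hmem2 : (2 : ℕ) ∈ {d | ∃ v, distTo v (TRS α (n + 1) θ) = d} := by
      refine ⟨fun j => (C (0 : F) * X ^ (n + 2) + C (-1 : F) * X ^ (n + 1)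
        + 0).eval (α j), (hdist2 _).mpr ?_⟩
      have h := dh_syndrome hc hn hα 0 (-1) hg0
      left
      constructor
      · rw [h.1, neg_zero]
      · rw [h.2]
        simp
    rw [covRad]
    exact le_antisymm (csSup_le ⟨2, hmem2⟩ hub) (le_csSup ⟨2, hub⟩ hmem2)
  rw [IsDeepHole, hcov, hdist2 u]
  constructor
  · intro hPu
    obtain ⟨w0, w1, g, hg, hu⟩ := dh_decomp hc θ hα u
    have h := dh_syndrome hc hn hα w0 w1 hg
    rw [← hu] at h
    refine ⟨w0, w1, g, hg, hu, ?_⟩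
    rcases hPu with ⟨h0, h1⟩ | ⟨h0, hroot⟩
    · left
      refine ⟨neg_eq_zero.mp (by rw [← h.1, h0]), fun hw1 => h1 ?_⟩
      rw [h.2, hw1, neg_zero]
    · right
      have hw0 : w0 ≠ 0 := fun hw => h0 (by rw [h.1, hw, neg_zero])
      have hratio : sy1 θ α u / sy0 u = w1 / w0 := by
        rw [h.1, h.2, neg_div_neg_eq]
      have hnsq : ¬ IsSquare (w0 ^ 2 - 4 * w0 * w1 * θ) := by
        intro hsq
        exact hroot (by rw [hratio]; exact (dh_quad h2 hθ hw0 w1).mpr hsq)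
      refine ⟨hw0, fun hzero => hnsq ⟨0, by rw [hzero, mul_zero]⟩, hnsq⟩
  · rintro ⟨w0, w1, g, hg, hu, hcond⟩
    have h := dh_syndrome hc hn hα w0 w1 hg
    rw [← hu] at h
    rcases hcond with ⟨hw0, hw1⟩ | ⟨hw0, -, hnsq⟩
    · left
      constructor
      · rw [h.1, hw0, neg_zero]
      · rw [h.2]; exact neg_ne_zero.mpr hw1
    · right
      constructor
      · rw [h.1]; exact neg_ne_zero.mpr hw0
      · intro hroot
        have hratio : sy1 θ α u / sy0 u = w1 / w0 := by
          rw [h.1, h.2, neg_div_neg_eq]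
        rw [hratio] at hroot
        exact hnsq ((dh_quad h2 hθ hw0 w1).mp hroot)
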